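/- arXiv:2010.13324 — 2 statements merged into one kernel-verified Lean document; each statement's English description precedes it below -/
import Mathlib

section
/- There exist a constant c > 0 and an integer n₀ such that for all n ≥ n₀ and all integers j with 0 ≤ j ≤ ⌊n/2⌋, ∑_{ℓ=0}^{n−2j} C(n−2j,ℓ)·N(n−j+1, ℓ+j) ≤ c^n·n^{2n−2j}. -/
/-- Odd double factorial: `ddf m` equals `m!!` for odd `m`, and `ddf 0 = 1`
(so that `ddf (2*n - 5)` with truncated subtraction encodes `(2n-5)!!`
with the convention `(-1)!! = 1`). -/
def ddf : ℕ → ℚ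
  | 0 => 1
  | 1 => 1
  | n + 2 => (n + 2) * ddf n

/-- `N n k` is the number of one-component galled networks with `n - 1` leaves whose `k`
reticulation-node children are labeled `1, …, k`, defined by the initial values
`N(n,0) = (2n-5)!!`, `N(n,1) = (n-2)(2n-5)!!` and the Gunawan--Rathin--Zhang recurrence. -/
def N : ℕ → ℕ → ℚ
  | n, 0 => ddf (2 * n - 5)
  | n, 1 => ((n : ℚ) - 2) * ddf (2 * n - 5)
  | n, k + 2 =>
      ((n : ℚ) + (k + 2) - 3) * N n (k + 1) + ((k : ℚ) + 1) * N n k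
        + (1 / 2) * ∑ d ∈ Finset.Icc 1 (k + 1),
            (((k + 1).choose d : ℚ)) * ddf (2 * d - 1) *
              (N (n - d) (k + 1 - d) - N (n - d + 1) (k + 1 - d))
  termination_by n k => k
  decreasing_by all_goals omega

lemma ddf_pos : ∀ m, 0 < ddf m
  | 0 => by norm_num [ddf]
  | 1 => by norm_num [ddf]
  | n+2 => by
    have h := ddf_pos n
    rw [ddf]
    have : (0:ℚ) < (n:ℚ) + 2 := by positivity
    exact mul_pos this h

lemma ddf_odd_le : ∀ d : ℕ, ddf (2*d+1) ≤ (2*(d:ℚ)+2)^(d+1)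
  | 0 => by norm_num [ddf]
  | d+1 => by
    have ih := ddf_odd_le d
    have h1 : 2*(d+1)+1 = (2*d+1)+2 := by ring
    rw [h1, ddf]
    push_cast
    have hd : (0:ℚ) ≤ (d:ℚ) := Nat.cast_nonneg d
    have hpos : (0:ℚ) < ddf (2*d+1) := ddf_pos _
    calc ((2*(d:ℚ)+1)+2) * ddf (2*d+1) ≤ ((2*(d:ℚ)+1)+2) * (2*(d:ℚ)+2)^(d+1) := by
          apply mul_le_mul_of_nonneg_left ih (by linarith)
      _ ≤ (2*((d:ℚ)+1)+2) * (2*((d:ℚ)+1)+2)^(d+1) := by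
          apply mul_le_mul (by linarith) (pow_le_pow_left₀ (by linarith) (by linarith) _)
            (by positivity) (by linarith)
      _ = (2*((d:ℚ)+1)+2)^(d+1+1) := by rw [← pow_succ']

lemma g_le {m e : ℕ} {X : ℚ} (hm : (m:ℚ) ≤ X) (he : m ≤ e) (hX : 1 ≤ X) :
    (4*(m:ℚ))^m ≤ (4*X)^e := by
  calc (4*(m:ℚ))^m ≤ (4*X)^m := by
        apply pow_le_pow_left₀ (by positivity) (by linarith)
    _ ≤ (4*X)^e := pow_le_pow_right₀ (by linarith) he

lemma ddf_bound (n : ℕ) : ddf (2*n - 5) ≤ (4*(n:ℚ))^n := by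
  match n with
  | 0 => norm_num [ddf]
  | 1 => norm_num [ddf]
  | 2 => norm_num [show 2*2-5 = 0 from rfl, ddf]
  | (m+3) =>
    have h : 2*(m+3)-5 = 2*m+1 := by omega
    rw [h]
    have hd : (0:ℚ) ≤ (m:ℚ) := Nat.cast_nonneg m
    calc ddf (2*m+1) ≤ (2*(m:ℚ)+2)^(m+1) := ddf_odd_le m
      _ ≤ (4*((m:ℚ)+3))^(m+1) := pow_le_pow_left₀ (by linarith) (by linarith) _
      _ ≤ (4*((m:ℚ)+3))^(m+3) := pow_le_pow_right₀ (by linarith) (by omega)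
      _ = (4*((m+3:ℕ):ℚ))^(m+3) := by push_cast; ring_nf

lemma geomHalfSum : ∀ m : ℕ, ∑ d ∈ Finset.Icc 1 m, ((1:ℚ)/2)^d = 1 - (1/2)^m
  | 0 => by simp
  | m+1 => by
    rw [Finset.sum_Icc_succ_top (by omega), geomHalfSum m]
    ring

lemma N_abs_le : ∀ k n : ℕ, k < n → |N n k| ≤ (4*((n:ℚ)+(k:ℚ)))^(n+k) := by
  intro k
  induction k using Nat.strong_induction_on with
  | _ k ih =>
  rcases k with _|_|k
  · -- k = 0
    intro n hn
    rw [N, abs_of_pos (ddf_pos _)]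
    simpa using ddf_bound n
  · -- k = 1
    intro n hn
    rw [N]
    have h2 : (2:ℚ) ≤ (n:ℚ) := by exact_mod_cast hn
    have hpos : 0 < ddf (2*n-5) := ddf_pos _
    rw [abs_of_nonneg (by nlinarith [hpos.le] : (0:ℚ) ≤ ((n:ℚ)-2) * ddf (2*n-5))]
    push_cast
    calc ((n:ℚ)-2) * ddf (2*n-5)
        ≤ (4*((n:ℚ)+1)) * (4*(n:ℚ))^n := by
          apply mul_le_mul (by linarith) (ddf_bound n) hpos.le (by linarith)
      _ ≤ (4*((n:ℚ)+1)) * (4*((n:ℚ)+1))^n := by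
          apply mul_le_mul_of_nonneg_left
            (pow_le_pow_left₀ (by positivity) (by linarith) _) (by linarith)
      _ = (4*((n:ℚ)+1))^(n+1) := (pow_succ' _ _).symm
  · -- k + 2
    intro n hn
    have hnQ : (0:ℚ) ≤ (n:ℚ) := Nat.cast_nonneg n
    have hkQ : (0:ℚ) ≤ (k:ℚ) := Nat.cast_nonneg k
    have hnk : ((k:ℚ))+2 < (n:ℚ) := by exact_mod_cast hn
    set X : ℚ := (n:ℚ) + (k:ℚ) + 2 with hXdef
    have hXcast : X = ((n+k+2 : ℕ):ℚ) := by push_cast; ring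
    have hX1 : (1:ℚ) ≤ X := by simp only [hXdef]; linarith
    have hP : (0:ℚ) ≤ (4*X)^(n+k+1) := by positivity
    have hT : (4*X)^(n+k+2) = (4*X) * (4*X)^(n+k+1) := pow_succ' _ _
    -- bound on first term
    have ih1 := ih (k+1) (by omega) n (by omega)
    have ih0 := ih k (by omega) n (by omega)
    push_cast at ih1 ih0
    have hA : |((n:ℚ) + ((k:ℚ)+2) - 3) * N n (k+1)| ≤ X * (4*X)^(n+k+1) := by
      rw [abs_mul]
      have hcoef : |(n:ℚ) + ((k:ℚ)+2) - 3| ≤ X := by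
        rw [abs_le]; constructor <;> simp only [hXdef] <;> linarith
      have hN1 : |N n (k+1)| ≤ (4*X)^(n+k+1) := by
        refine le_trans ih1 ?_
        have : (n+(k+1)) = n+k+1 := by omega
        rw [this]
        apply pow_le_pow_left₀ (by positivity) (by simp only [hXdef]; linarith)
      exact mul_le_mul hcoef hN1 (abs_nonneg _) (le_trans zero_le_one hX1)
    have hB : |((k:ℚ)+1) * N n k| ≤ X * (4*X)^(n+k+1) := by
      rw [abs_mul]
      have hcoef : |(k:ℚ)+1| ≤ X := by
        rw [abs_of_nonneg (by linarith)]; simp only [hXdef]; linarith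
      have hN0 : |N n k| ≤ (4*X)^(n+k+1) := by
        refine le_trans ih0 ?_
        calc (4*((n:ℚ)+(k:ℚ)))^(n+k) ≤ (4*X)^(n+k) := by
              apply pow_le_pow_left₀ (by positivity) (by simp only [hXdef]; linarith)
          _ ≤ (4*X)^(n+k+1) := pow_le_pow_right₀ (by linarith) (by omega)
      exact mul_le_mul hcoef hN0 (abs_nonneg _) (by linarith)
    -- bound on the sum
    have key : ∀ d ∈ Finset.Icc 1 (k+1),
        |(((k+1).choose d : ℚ)) * ddf (2*d-1) *
          (N (n-d) (k+1-d) - N (n-d+1) (k+1-d))| ≤ ((1:ℚ)/2)^d * (4*X)^(n+k+2) := by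
      intro d hd
      obtain ⟨hd1, hd2⟩ := Finset.mem_Icc.mp hd
      set e : ℕ := n+k+2-2*d with hedef
      -- bounds on the two N values
      have ihd1 := ih (k+1-d) (by omega) (n-d) (by omega)
      have ihd2 := ih (k+1-d) (by omega) (n-d+1) (by omega)
      have c1 : ((n-d:ℕ):ℚ) + ((k+1-d:ℕ):ℚ) = (((n-d)+(k+1-d) : ℕ):ℚ) := by push_cast; ring
      have c2 : ((n-d+1:ℕ):ℚ) + ((k+1-d:ℕ):ℚ) = (((n-d+1)+(k+1-d) : ℕ):ℚ) := by push_cast; ring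
      rw [c1] at ihd1
      rw [c2] at ihd2
      have hN1 : |N (n-d) (k+1-d)| ≤ (4*X)^e := by
        refine le_trans ihd1 (g_le ?_ (by omega) hX1)
        rw [hXcast]; exact_mod_cast Nat.le_of_lt_succ (by omega)
      have hN2 : |N (n-d+1) (k+1-d)| ≤ (4*X)^e := by
        refine le_trans ihd2 (g_le ?_ (by omega) hX1)
        rw [hXcast]; exact_mod_cast Nat.le_of_lt_succ (by omega)
      have hch : (((k+1).choose d : ℕ):ℚ) ≤ X^d := by
        calc (((k+1).choose d : ℕ):ℚ) ≤ (((k+1)^d : ℕ):ℚ) := by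
              exact_mod_cast Nat.choose_le_pow (k+1) d
          _ ≤ X^d := by
              push_cast
              exact pow_le_pow_left₀ (by positivity) (by simp only [hXdef]; linarith) d
      have hdf : ddf (2*d-1) ≤ (2*X)^d := by
        have e3 : 2*d-1 = 2*(d-1)+1 := by omega
        have e4 : (d-1)+1 = d := by omega
        have h5 : ((d-1:ℕ):ℚ) ≤ (k:ℚ) := by exact_mod_cast (by omega : d-1 ≤ k)
        rw [e3]
        calc ddf (2*(d-1)+1) ≤ (2*((d-1:ℕ):ℚ)+2)^((d-1)+1) := ddf_odd_le _
          _ = (2*((d-1:ℕ):ℚ)+2)^d := by rw [e4]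
          _ ≤ (2*X)^d := pow_le_pow_left₀ (by positivity) (by simp only [hXdef]; linarith) d
      have hdfnn : (0:ℚ) ≤ ddf (2*d-1) := (ddf_pos _).le
      have hdiff : |N (n-d) (k+1-d) - N (n-d+1) (k+1-d)| ≤ 2*(4*X)^e := by
        calc |N (n-d) (k+1-d) - N (n-d+1) (k+1-d)|
            ≤ |N (n-d) (k+1-d)| + |N (n-d+1) (k+1-d)| := abs_sub _ _
          _ ≤ 2*(4*X)^e := by linarith
      have hmain : (((k+1).choose d : ℕ):ℚ) * ddf (2*d-1) *
          |N (n-d) (k+1-d) - N (n-d+1) (k+1-d)| ≤ X^d * (2*X)^d * (2*(4*X)^e) := by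
        apply mul_le_mul (mul_le_mul hch hdf hdfnn (by positivity)) hdiff (abs_nonneg _)
          (by positivity)
      have hscal : X^d * (2*X)^d * (2*(4*X)^e) ≤ ((1:ℚ)/2)^d * (4*X)^(n+k+2) := by
        have hsplit : n+k+2 = 2*d + e := by omega
        rw [hsplit, pow_add]
        have step1 : X^d*(2*X)^d = (2*X^2)^d := by rw [← mul_pow]; congr 1; ring
        have h4d : (2:ℚ) ≤ 4^d := by
          calc (2:ℚ) ≤ 4^1 := by norm_num
            _ ≤ 4^d := pow_le_pow_right₀ (by norm_num) hd1
        have hid : (2*X^2)^d * (4:ℚ)^d = (1/2)^d * (4*X)^(2*d) := by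
          rw [pow_mul, ← mul_pow, ← mul_pow]; congr 1; ring
        calc X^d * (2*X)^d * (2*(4*X)^e) = (2*X^2)^d * (2*(4*X)^e) := by rw [step1]
          _ ≤ (2*X^2)^d * ((4:ℚ)^d*(4*X)^e) := by
              apply mul_le_mul_of_nonneg_left
                (mul_le_mul_of_nonneg_right h4d (by positivity)) (by positivity)
          _ = ((2*X^2)^d * (4:ℚ)^d) * (4*X)^e := by ring
          _ = ((1/2)^d * (4*X)^(2*d)) * (4*X)^e := by rw [hid]
          _ = (1/2)^d * ((4*X)^(2*d) * (4*X)^e) := by ring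
      calc |(((k+1).choose d : ℚ)) * ddf (2*d-1) *
            (N (n-d) (k+1-d) - N (n-d+1) (k+1-d))|
          = (((k+1).choose d : ℕ):ℚ) * ddf (2*d-1) *
            |N (n-d) (k+1-d) - N (n-d+1) (k+1-d)| := by
            rw [abs_mul, abs_mul, abs_of_nonneg (by positivity : (0:ℚ) ≤ (((k+1).choose d : ℕ):ℚ)),
              abs_of_nonneg hdfnn]
        _ ≤ X^d * (2*X)^d * (2*(4*X)^e) := hmain
        _ ≤ ((1:ℚ)/2)^d * (4*X)^(n+k+2) := hscal
    have hsum : |∑ d ∈ Finset.Icc 1 (k+1),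
        (((k+1).choose d : ℚ)) * ddf (2*d-1) *
          (N (n-d) (k+1-d) - N (n-d+1) (k+1-d))| ≤ (4*X)^(n+k+2) := by
      calc |∑ d ∈ Finset.Icc 1 (k+1), _| ≤ ∑ d ∈ Finset.Icc 1 (k+1),
            |(((k+1).choose d : ℚ)) * ddf (2*d-1) *
              (N (n-d) (k+1-d) - N (n-d+1) (k+1-d))| := Finset.abs_sum_le_sum_abs _ _
        _ ≤ ∑ d ∈ Finset.Icc 1 (k+1), ((1:ℚ)/2)^d * (4*X)^(n+k+2) := Finset.sum_le_sum key
        _ = (∑ d ∈ Finset.Icc 1 (k+1), ((1:ℚ)/2)^d) * (4*X)^(n+k+2) := by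
            rw [Finset.sum_mul]
        _ ≤ 1 * (4*X)^(n+k+2) := by
            apply mul_le_mul_of_nonneg_right _ (by positivity)
            rw [geomHalfSum]
            have : (0:ℚ) ≤ ((1:ℚ)/2)^(k+1) := by positivity
            linarith
        _ = (4*X)^(n+k+2) := one_mul _
    -- assemble
    have hgoal : |N n (k+2)| ≤ (4*X)^(n+k+2) := by
      rw [N]
      push_cast
      calc |((n:ℚ) + ((k:ℚ)+2) - 3) * N n (k+1) + ((k:ℚ)+1) * N n k
            + (1/2) * ∑ d ∈ Finset.Icc 1 (k+1),
              (((k+1).choose d : ℚ)) * ddf (2*d-1) *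
                (N (n-d) (k+1-d) - N (n-d+1) (k+1-d))|
          ≤ |((n:ℚ) + ((k:ℚ)+2) - 3) * N n (k+1) + ((k:ℚ)+1) * N n k|
            + |(1/2) * ∑ d ∈ Finset.Icc 1 (k+1),
              (((k+1).choose d : ℚ)) * ddf (2*d-1) *
                (N (n-d) (k+1-d) - N (n-d+1) (k+1-d))| := abs_add_le _ _
        _ ≤ (|((n:ℚ) + ((k:ℚ)+2) - 3) * N n (k+1)| + |((k:ℚ)+1) * N n k|)
            + (1/2) * |∑ d ∈ Finset.Icc 1 (k+1),
              (((k+1).choose d : ℚ)) * ddf (2*d-1) *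
                (N (n-d) (k+1-d) - N (n-d+1) (k+1-d))| := by
            rw [abs_mul]
            have : |(1/2 : ℚ)| = 1/2 := by norm_num
            rw [this]
            exact add_le_add (abs_add_le _ _) le_rfl
        _ ≤ (X * (4*X)^(n+k+1) + X * (4*X)^(n+k+1)) + (1/2) * (4*X)^(n+k+2) := by
            apply add_le_add (add_le_add hA hB)
            apply mul_le_mul_of_nonneg_left hsum (by norm_num)
        _ ≤ (4*X)^(n+k+2) := by rw [hT]; nlinarith [hP, hX1]
    refine le_trans hgoal (le_of_eq ?_)
    rw [show n+(k+1+1) = n+k+2 from by omega]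
    congr 1
    rw [hXdef]
    push_cast
    ring

lemma coefAux : ∀ n : ℕ, 1 ≤ n → 12 * 576^n ≤ 1000000^n := by
  intro n hn
  induction n, hn using Nat.le_induction with
  | base => norm_num
  | succ n hn ih =>
    calc 12 * 576^(n+1) = 576 * (12*576^n) := by ring
      _ ≤ 576 * 1000000^n := Nat.mul_le_mul_left _ ih
      _ ≤ 1000000^(n+1) := by
          rw [pow_succ, Nat.mul_comm]
          exact Nat.mul_le_mul_left _ (by norm_num)

lemma coefBound (n j m : ℕ) (h1 : 1 ≤ n) (hm : m ≤ n) :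
    2^m * 12^(2*n-2*j+1) * n ≤ 1000000^n := by
  have h2 : (2:ℕ)^m ≤ 2^n := Nat.pow_le_pow_right (by norm_num) hm
  have h3 : (12:ℕ)^(2*n-2*j+1) ≤ 12^(2*n+1) := Nat.pow_le_pow_right (by norm_num) (by omega)
  have h4 : n ≤ 2^n := (Nat.lt_two_pow_self (n := n)).le
  calc 2^m * 12^(2*n-2*j+1) * n ≤ 2^n * 12^(2*n+1) * 2^n :=
        Nat.mul_le_mul (Nat.mul_le_mul h2 h3) h4
    _ = 12 * 576^n := by
        have h5 : (12:ℕ)^(2*n+1) = 12 * 144^n := by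
          rw [pow_succ, pow_mul]; norm_num [Nat.mul_comm]
        have h6 : (576:ℕ)^n = 2^n*144^n*2^n := by
          rw [show (576:ℕ)=2*144*2 by norm_num, mul_pow, mul_pow]
        rw [h5, h6]; ring
    _ ≤ 1000000^n := coefAux n h1

lemma rpow_helper {b c : ℝ} {u e : ℕ} (h0 : 0 ≤ b) (hb : b ≤ c) (h1c : 1 ≤ c) (hue : u ≤ e) :
    b^u ≤ c^e :=
  le_trans (pow_le_pow_left₀ h0 hb u) (pow_le_pow_right₀ h1c hue)

/-- There are `c > 0` and `n₀` such that for all `n ≥ n₀` and `0 ≤ j ≤ ⌊n/2⌋`,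
`∑_{ℓ=0}^{n-2j} C(n-2j,ℓ) N(n-j+1, ℓ+j) ≤ cⁿ n^{2n-2j}`. -/
theorem inner_sum_upper_bound :
    ∃ c : ℝ, 0 < c ∧ ∃ n₀ : ℕ, ∀ n : ℕ, n₀ ≤ n → ∀ j : ℕ, j ≤ n / 2 →
      (∑ ℓ ∈ Finset.range (n - 2 * j + 1),
          ((n - 2 * j).choose ℓ : ℝ) * ((N (n - j + 1) (ℓ + j) : ℚ) : ℝ))
        ≤ c ^ n * (n : ℝ) ^ (2 * n - 2 * j) := by
  refine ⟨1000000, by norm_num, 1, ?_⟩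
  intro n hn j hj
  have h2j : 2*j ≤ n := by omega
  have hterm : ∀ ℓ ∈ Finset.range (n-2*j+1),
      ((n-2*j).choose ℓ : ℝ) * ((N (n-j+1) (ℓ+j) : ℚ) : ℝ)
        ≤ ((n-2*j).choose ℓ : ℝ) * (12*(n:ℝ))^(2*n-2*j+1) := by
    intro ℓ hℓ
    have hℓ' : ℓ ≤ n-2*j := by simpa [Finset.mem_range, Nat.lt_succ_iff] using hℓ
    apply mul_le_mul_of_nonneg_left _ (by positivity)
    have hk : ℓ+j < n-j+1 := by omega
    have hb := N_abs_le (ℓ+j) (n-j+1) hk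
    have hbQ : N (n-j+1) (ℓ+j)
        ≤ (4*(((n-j+1:ℕ):ℚ)+((ℓ+j:ℕ):ℚ)))^((n-j+1)+(ℓ+j)) :=
      (le_abs_self _).trans hb
    have hR : ((N (n-j+1) (ℓ+j) : ℚ) : ℝ)
        ≤ (4*(((n-j+1:ℕ):ℝ)+((ℓ+j:ℕ):ℝ)))^((n-j+1)+(ℓ+j)) := by
      have := (Rat.cast_le (K := ℝ)).mpr hbQ
      push_cast at this ⊢
      convert this using 2
    refine le_trans hR ?_
    apply rpow_helper (by positivity) ?_ ?_ (by omega)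
    · have hc : ((4*((n-j+1)+(ℓ+j)) : ℕ) : ℝ) ≤ ((12*n : ℕ):ℝ) :=
        Nat.cast_le.mpr (by omega)
      push_cast at hc ⊢
      linarith
    · have h1n : (1:ℝ) ≤ (n:ℝ) := by exact_mod_cast hn
      linarith
  calc (∑ ℓ ∈ Finset.range (n - 2 * j + 1),
          ((n - 2 * j).choose ℓ : ℝ) * ((N (n - j + 1) (ℓ + j) : ℚ) : ℝ))
      ≤ ∑ ℓ ∈ Finset.range (n-2*j+1),
          ((n-2*j).choose ℓ : ℝ) * (12*(n:ℝ))^(2*n-2*j+1) := Finset.sum_le_sum hterm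
    _ = ((2^(n-2*j) : ℕ) : ℝ) * (12*(n:ℝ))^(2*n-2*j+1) := by
        rw [← Finset.sum_mul]
        congr 1
        rw [← Nat.cast_sum]
        exact_mod_cast congrArg (Nat.cast : ℕ → ℝ) (Nat.sum_range_choose (n-2*j))
    _ = (((2^(n-2*j) * 12^(2*n-2*j+1) * n : ℕ)):ℝ) * (n:ℝ)^(2*n-2*j) := by
        push_cast
        ring
    _ ≤ ((1000000^n : ℕ):ℝ) * (n:ℝ)^(2*n-2*j) := by
        apply mul_le_mul_of_nonneg_right _ (by positivity)
        exact_mod_cast coefBound n j (n-2*j) hn (by omega)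
    _ = (1000000:ℝ)^n * (n:ℝ)^(2*n-2*j) := by push_cast; ring
end

section
/- For each integer j ≥ 0, the series ∑_{m=0}^{∞} (m−j)·S(j, m−j) converges with sum e^{1/2}·(1/2 − j/3)·6^j; that is, ∑_{k≥−j} k·S(j,k) = e^{1/2}·(1/2 − j/3)·6^j. Consequently, for the joint limit law P(X=j, Y=k) = (e^{−7/8}/(16^j·j!))·S(j,k), the mean of Y equals E(Y) = ∑_{j≥0} ∑_{k≥−j} k·(e^{−7/8}/(16^j·j!))·S(j,k) = 3/8. -/
/-- `cj j ℓ = [z^ℓ] (1 + 2z + 3z²)^j`. -/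
noncomputable def cj (j ℓ : ℕ) : ℚ := (((1 + 2 * Polynomial.X + 3 * Polynomial.X ^ 2 : Polynomial ℚ)) ^ j).coeff ℓ

/-- `S j k = ∑_{ℓ = max(0, j-k)}^{2j} c_j(ℓ) / ((ℓ+k-j)! · 2^{ℓ+k-j})`, the coefficient of
`z^{j-k}` in the Laurent series `e^{1/(2z)} (1+2z+3z²)^j`. -/
noncomputable def S (j : ℕ) (k : ℤ) : ℝ :=
  ∑ ℓ ∈ Finset.range (2 * j + 1),
    if 0 ≤ (ℓ : ℤ) + k - j then
      ((cj j ℓ : ℚ) : ℝ) /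
        (((((ℓ : ℤ) + k - j).toNat).factorial : ℝ) * 2 ^ (((ℓ : ℤ) + k - j).toNat))
    else 0

open Polynomial

lemma Pdeg : ((1 + 2 * X + 3 * X ^ 2 : ℚ[X])).natDegree = 2 := by compute_degree!

lemma Pjdeg (j : ℕ) : (((1 + 2 * X + 3 * X ^ 2 : ℚ[X])) ^ j).natDegree = 2 * j := by
  rw [natDegree_pow, Pdeg]; ring

lemma sumA (j : ℕ) : ∑ ℓ ∈ Finset.range (2 * j + 1), cj j ℓ = 6 ^ j := by
  have hd : (((1 + 2 * X + 3 * X ^ 2 : ℚ[X])) ^ j).natDegree < 2 * j + 1 := by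
    rw [Pjdeg]; omega
  have h := Polynomial.eval_eq_sum_range' hd 1
  simp only [one_pow, mul_one] at h
  have h2 : (((1 + 2 * X + 3 * X ^ 2 : ℚ[X])) ^ j).eval 1 = 6 ^ j := by
    rw [eval_pow]; norm_num
  rw [h2] at h
  rw [h]; rfl

lemma sumB (j : ℕ) : ∑ ℓ ∈ Finset.range (2 * j + 1), (ℓ : ℚ) * cj j ℓ = 4 * j / 3 * 6 ^ j := by
  set p : ℚ[X] := ((1 + 2 * X + 3 * X ^ 2 : ℚ[X])) ^ j with hp
  have hd : (derivative p).natDegree < 2 * j + 1 := by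
    calc (derivative p).natDegree ≤ p.natDegree - 1 := natDegree_derivative_le p
    _ < 2 * j + 1 := by rw [Pjdeg]; omega
  have h := Polynomial.eval_eq_sum_range' hd 1
  simp only [one_pow, mul_one, coeff_derivative] at h
  have hder : (derivative p).eval 1 = 8 * j * 6 ^ (j - 1) := by
    rw [hp, derivative_pow]
    simp only [eval_mul, eval_pow, eval_natCast]
    have : (derivative (1 + 2 * X + 3 * X ^ 2 : ℚ[X])).eval 1 = 8 := by
      simp [derivative_add, derivative_one, derivative_mul]
      norm_num
    rw [this]
    norm_num
    ring
  have key : ∑ ℓ ∈ Finset.range (2 * j + 1), (ℓ : ℚ) * cj j ℓ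
      = ∑ i ∈ Finset.range (2 * j + 1), p.coeff (i + 1) * ((i : ℚ) + 1) := by
    have h1 : ∑ ℓ ∈ Finset.range (2 * j + 2), (ℓ : ℚ) * cj j ℓ
        = ∑ i ∈ Finset.range (2 * j + 1), ((i : ℚ) + 1) * cj j (i + 1) + 0 * cj j 0 := by
      rw [Finset.sum_range_succ']
      push_cast
      rfl
    have h2 : cj j (2 * j + 1) = 0 := by
      unfold cj
      apply coeff_eq_zero_of_natDegree_lt
      rw [Pjdeg]; omega
    rw [Finset.sum_range_succ, h2, mul_zero, add_zero] at h1
    rw [h1, zero_mul, add_zero]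
    apply Finset.sum_congr rfl
    intro i _
    rw [mul_comm]; rfl
  rw [key, ← h, hder]
  cases j with
  | zero => norm_num
  | succ n =>
    have : (6 : ℚ) ^ (n + 1) = 6 * 6 ^ n := by ring
    simp only [Nat.add_sub_cancel, this]
    push_cast
    ring

lemma hasSum_exp_real (x : ℝ) : HasSum (fun n : ℕ => x ^ n / n.factorial) (Real.exp x) := by
  rw [Real.exp_eq_exp_ℝ]
  exact NormedSpace.expSeries_div_hasSum_exp x

lemma hasSum_n_exp (x : ℝ) :
    HasSum (fun n : ℕ => (n : ℝ) * x ^ n / n.factorial) (x * Real.exp x) := by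
  have h := (hasSum_exp_real x).mul_left x
  have h2 : HasSum (fun n : ℕ => ((n + 1 : ℕ) : ℝ) * x ^ (n + 1) / (n + 1).factorial)
      (x * Real.exp x) := by
    refine h.congr_fun fun n => ?_
    have hf : ((n + 1).factorial : ℝ) = (n + 1) * n.factorial := by
      rw [Nat.factorial_succ]; push_cast; ring
    rw [hf]
    have h1 : ((n : ℝ) + 1) ≠ 0 := by positivity
    have h2 : (n.factorial : ℝ) ≠ 0 := Nat.cast_ne_zero.mpr n.factorial_ne_zero
    push_cast
    field_simp
    ring
  have := (hasSum_nat_add_iff (f := fun n : ℕ => (n : ℝ) * x ^ n / n.factorial) 1).mp h2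
  simpa using this

lemma per (j ℓ : ℕ) (hℓ : ℓ ≤ 2 * j) (c : ℝ) :
    HasSum (fun m : ℕ => ((m : ℝ) - j) *
      (if 0 ≤ (ℓ : ℤ) + ((m : ℤ) - j) - j then
        c / ((((ℓ : ℤ) + ((m : ℤ) - j) - j).toNat.factorial : ℝ) *
          2 ^ ((ℓ : ℤ) + ((m : ℤ) - j) - j).toNat)
      else 0))
      (c * Real.exp (1 / 2) * (1 / 2 + (j : ℝ) - ℓ)) := by
  set f : ℕ → ℝ := fun m => ((m : ℝ) - j) *
      (if 0 ≤ (ℓ : ℤ) + ((m : ℤ) - j) - j then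
        c / ((((ℓ : ℤ) + ((m : ℤ) - j) - j).toNat.factorial : ℝ) *
          2 ^ ((ℓ : ℤ) + ((m : ℤ) - j) - j).toNat)
      else 0) with hf
  have base : HasSum (fun n : ℕ => ((n : ℝ) + j - ℓ) * (c / (n.factorial * 2 ^ n)))
      (c * Real.exp (1 / 2) * (1 / 2 + (j : ℝ) - ℓ)) := by
    have h := ((hasSum_n_exp (1 / 2)).add
      ((hasSum_exp_real (1 / 2)).mul_left ((j : ℝ) - ℓ))).mul_left c
    have hv : c * Real.exp (1 / 2) * (1 / 2 + (j : ℝ) - ℓ)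
        = c * (1 / 2 * Real.exp (1 / 2) + ((j : ℝ) - ℓ) * Real.exp (1 / 2)) := by ring
    rw [hv]
    refine h.congr_fun fun n => ?_
    have h2n : ((2 : ℝ)) ^ n ≠ 0 := by positivity
    have hfn : (n.factorial : ℝ) ≠ 0 := Nat.cast_ne_zero.mpr n.factorial_ne_zero
    field_simp
    have hp : ((1:ℝ) / 2) ^ n * 2 ^ n = 1 := by rw [← mul_pow]; norm_num
    linear_combination (-((n:ℝ) * c + (j:ℝ) * c - (ℓ:ℝ) * c)) * hp
  have hshift : ∀ n : ℕ, f (n + (2 * j - ℓ)) = ((n : ℝ) + j - ℓ) * (c / (n.factorial * 2 ^ n)) := by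
    intro n
    have hcond : (ℓ : ℤ) + (((n + (2 * j - ℓ) : ℕ) : ℤ) - j) - j = n := by omega
    simp only [hf]
    rw [hcond, if_pos (Int.natCast_nonneg n), Int.toNat_natCast]
    congr 1
    push_cast [Nat.cast_sub hℓ]
    ring
  have hzero : ∀ m ∈ Finset.range (2 * j - ℓ), f m = 0 := by
    intro m hm
    simp only [Finset.mem_range] at hm
    simp only [hf]
    rw [if_neg (by omega), mul_zero]
  have key : HasSum (fun n => f (n + (2 * j - ℓ)))
      (c * Real.exp (1 / 2) * (1 / 2 + (j : ℝ) - ℓ)) := by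
    rw [funext hshift]; exact base
  have h := (hasSum_nat_add_iff (f := f) (2 * j - ℓ)).mp key
  rwa [Finset.sum_eq_zero hzero, add_zero] at h

lemma part1 (j : ℕ) : HasSum (fun m : ℕ => ((m : ℝ) - j) * S j ((m : ℤ) - j))
    (Real.exp (1 / 2) * (1 / 2 - (j : ℝ) / 3) * 6 ^ j) := by
  have hterm : ∀ ℓ ∈ Finset.range (2 * j + 1),
      HasSum (fun m : ℕ => ((m : ℝ) - j) *
        (if 0 ≤ (ℓ : ℤ) + ((m : ℤ) - j) - j then
          ((cj j ℓ : ℚ) : ℝ) / ((((ℓ : ℤ) + ((m : ℤ) - j) - j).toNat.factorial : ℝ) *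
            2 ^ ((ℓ : ℤ) + ((m : ℤ) - j) - j).toNat)
        else 0))
      (((cj j ℓ : ℚ) : ℝ) * Real.exp (1 / 2) * (1 / 2 + (j : ℝ) - ℓ)) := by
    intro ℓ hℓ
    exact per j ℓ (by simp only [Finset.mem_range] at hℓ; omega) _
  have h := hasSum_sum hterm
  have hfun : (fun m : ℕ => ∑ ℓ ∈ Finset.range (2 * j + 1), ((m : ℝ) - j) *
        (if 0 ≤ (ℓ : ℤ) + ((m : ℤ) - j) - j then
          ((cj j ℓ : ℚ) : ℝ) / ((((ℓ : ℤ) + ((m : ℤ) - j) - j).toNat.factorial : ℝ) *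
            2 ^ ((ℓ : ℤ) + ((m : ℤ) - j) - j).toNat)
        else 0))
      = fun m : ℕ => ((m : ℝ) - j) * S j ((m : ℤ) - j) := by
    funext m
    rw [S, Finset.mul_sum]
  rw [hfun] at h
  have A : ∑ ℓ ∈ Finset.range (2 * j + 1), ((cj j ℓ : ℚ) : ℝ) = 6 ^ j := by
    have := sumA j
    exact_mod_cast congrArg (fun q : ℚ => (q : ℝ)) this
  have B : ∑ ℓ ∈ Finset.range (2 * j + 1), (ℓ : ℝ) * ((cj j ℓ : ℚ) : ℝ)
      = 4 * j / 3 * 6 ^ j := by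
    have h0 := congrArg (fun q : ℚ => (q : ℝ)) (sumB j)
    push_cast at h0
    convert h0 using 2 <;> push_cast <;> ring
  have hval : ∑ ℓ ∈ Finset.range (2 * j + 1),
      ((cj j ℓ : ℚ) : ℝ) * Real.exp (1 / 2) * (1 / 2 + (j : ℝ) - ℓ)
      = Real.exp (1 / 2) * (1 / 2 - (j : ℝ) / 3) * 6 ^ j := by
    have step : ∑ ℓ ∈ Finset.range (2 * j + 1),
        ((cj j ℓ : ℚ) : ℝ) * Real.exp (1 / 2) * (1 / 2 + (j : ℝ) - ℓ)
        = Real.exp (1 / 2) * (1 / 2 + (j : ℝ)) *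
            (∑ ℓ ∈ Finset.range (2 * j + 1), ((cj j ℓ : ℚ) : ℝ))
          - Real.exp (1 / 2) *
            (∑ ℓ ∈ Finset.range (2 * j + 1), (ℓ : ℝ) * ((cj j ℓ : ℚ) : ℝ)) := by
      rw [Finset.mul_sum, Finset.mul_sum, ← Finset.sum_sub_distrib]
      exact Finset.sum_congr rfl fun ℓ _ => by ring
    rw [step, A, B]
    ring
  rwa [hval] at h

/-- For each `j ≥ 0`, `∑_{k ≥ -j} k · S(j,k) = e^{1/2}(1/2 - j/3) 6^j`; consequently, for the
joint limit law `P(X = j, Y = k) = (e^{-7/8}/(16^j j!)) S(j,k)`, the mean of `Y` is `3/8`. -/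
theorem S_weighted_sum :
    (∀ j : ℕ, HasSum (fun m : ℕ => ((m : ℝ) - j) * S j ((m : ℤ) - j))
        (Real.exp (1 / 2) * (1 / 2 - (j : ℝ) / 3) * 6 ^ j)) ∧
    HasSum (fun j : ℕ => ∑' m : ℕ, ((m : ℝ) - j) *
        (Real.exp (-(7 / 8)) / (16 ^ j * (j.factorial : ℝ)) * S j ((m : ℤ) - j)))
      (3 / 8) := by
  refine ⟨part1, ?_⟩
  have htsum : ∀ j : ℕ, (∑' m : ℕ, ((m : ℝ) - j) *
      (Real.exp (-(7 / 8)) / (16 ^ j * (j.factorial : ℝ)) * S j ((m : ℤ) - j)))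
      = Real.exp (-(7 / 8)) / (16 ^ j * (j.factorial : ℝ)) *
        (Real.exp (1 / 2) * (1 / 2 - (j : ℝ) / 3) * 6 ^ j) := by
    intro j
    have h := (part1 j).mul_left (Real.exp (-(7 / 8)) / (16 ^ j * (j.factorial : ℝ)))
    have hfun : (fun m : ℕ => Real.exp (-(7 / 8)) / (16 ^ j * (j.factorial : ℝ)) *
        (((m : ℝ) - j) * S j ((m : ℤ) - j)))
        = fun m : ℕ => ((m : ℝ) - j) *
          (Real.exp (-(7 / 8)) / (16 ^ j * (j.factorial : ℝ)) * S j ((m : ℤ) - j)) := by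
      funext m; ring
    rw [hfun] at h
    exact h.tsum_eq
  simp only [htsum]
  -- now show HasSum (fun j => C_j * (E*(1/2 - j/3)*6^j)) (3/8)
  have e1 := (hasSum_exp_real (3 / 8)).mul_left (Real.exp (-(3 / 8)) / 2)
  have e2 := (hasSum_n_exp (3 / 8)).mul_left (Real.exp (-(3 / 8)) / 3)
  have h := e1.sub e2
  have hE : Real.exp (-(3 / 8)) * Real.exp (3 / 8) = 1 := by
    rw [← Real.exp_add]; norm_num
  have hval : Real.exp (-(3 / 8)) / 2 * Real.exp (3 / 8)
      - Real.exp (-(3 / 8)) / 3 * (3 / 8 * Real.exp (3 / 8)) = 3 / 8 := by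
    field_simp
    nlinarith [hE]
  rw [hval] at h
  refine h.congr_fun fun j => ?_
  have hE2 : Real.exp (-(7 / 8)) * Real.exp (1 / 2) = Real.exp (-(3 / 8)) := by
    rw [← Real.exp_add]; norm_num
  have h16 : ((16 : ℝ)) ^ j ≠ 0 := by positivity
  have hfn : (j.factorial : ℝ) ≠ 0 := Nat.cast_ne_zero.mpr j.factorial_ne_zero
  have h38 : ((3 : ℝ) / 8) ^ j = 6 ^ j / 16 ^ j := by
    rw [div_pow]
    norm_num
    rw [show (8:ℝ)^j = 16^j/2^j by rw [← div_pow]; norm_num,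
        show (6:ℝ)^j = 3^j*2^j by rw [← mul_pow]; norm_num]
    field_simp
  rw [h38, ← hE2]
  field_simp
end
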